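/- Let c = (c_0, c_1, …, c_{n−1}) ∈ F_q^n with 0 < w_H(c) < n, and let I(c) = L({0 ≤ i ≤ n−1 : c_i ≠ 0}). Then w_P(c) = w_H(c) + I(c), and consequently w_H(c) + 1 ≤ w_P(c) ≤ min{2·w_H(c), n}. -/

import Mathlib

open Polynomial

/-- The pair-distance between two vectors indexed by `ZMod n`,
with indices taken modulo `n`. -/
def pairDist {n : ℕ} [NeZero n] {α : Type*} [DecidableEq α] (u v : ZMod n → α) : ℕ :=
  (Finset.univ.filter fun i : ZMod n => (u i, u (i + 1)) ≠ (v i, v (i + 1))).card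

/-- A finite subset of `ZMod n` consisting of (at least one) cyclically consecutive elements. -/
def IsArc {n : ℕ} (T : Finset (ZMod n)) : Prop :=
  ∃ (a : ZMod n) (k : ℕ), 0 < k ∧ T = (Finset.range k).image fun j : ℕ => a + (j : ZMod n)

/-- `L(S)`: the minimal number of parts in a partition of `S` into nonempty sets of
cyclically consecutive elements of `ZMod n`. -/
noncomputable def cycL {n : ℕ} (S : Finset (ZMod n)) : ℕ :=
  sInf {m | ∃ P : Finset (Finset (ZMod n)), P.card = m ∧ (∀ T ∈ P, IsArc T) ∧
    (↑P : Set (Finset (ZMod n))).PairwiseDisjoint id ∧ P.sup id = S}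

/-- The polynomial `∑ i, c i * x^i` associated to a vector `c` of length `n`. -/
noncomputable def polyOf {n : ℕ} [NeZero n] {F : Type*} [Semiring F] (c : ZMod n → F) :
    Polynomial F :=
  ∑ i : ZMod n, Polynomial.C (c i) * Polynomial.X ^ i.val

/-- `d` is the minimum pair-distance of the code `Code`. -/
def IsMinPairDist {n : ℕ} [NeZero n] {α : Type*} [DecidableEq α]
    (Code : Set (ZMod n → α)) (d : ℕ) : Prop :=
  (∀ u ∈ Code, ∀ v ∈ Code, u ≠ v → d ≤ pairDist u v) ∧
    ∃ u ∈ Code, ∃ v ∈ Code, u ≠ v ∧ pairDist u v = d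

/-- The coefficient `a₀(i) = ∑_{j=0}^{⌊(i−2)/2⌋} C(i−2−j, j) b^{i−2−2j} c^{j+1}`. -/
noncomputable def aCoeff0 {F : Type*} [Field F] (b c : F) (i : ℕ) : F :=
  ∑ j ∈ Finset.range ((i - 2) / 2 + 1),
    ((i - 2 - j).choose j : F) * b ^ (i - 2 - 2 * j) * c ^ (j + 1)

/-- The coefficient `a₁(i) = ∑_{j=0}^{⌊(i−1)/2⌋} C(i−1−j, j) b^{i−1−2j} c^{j}`. -/
noncomputable def aCoeff1 {F : Type*} [Field F] (b c : F) (i : ℕ) : F :=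
  ∑ j ∈ Finset.range ((i - 1) / 2 + 1),
    ((i - 1 - j).choose j : F) * b ^ (i - 1 - 2 * j) * c ^ j

set_option linter.unusedSectionVars false

section AuxLemmas

variable {n : ℕ} [NeZero n] {F : Type*} [Zero F] [DecidableEq F] {c : ZMod n → F}

lemma exZ (hz : ∃ z, c z = 0) (x : ZMod n) : ∃ k : ℕ, c (x + (k : ZMod n)) = 0 := by
  obtain ⟨z, hz⟩ := hz
  refine ⟨(z - x).val, ?_⟩
  rwa [ZMod.natCast_rightInverse (z - x), show x + (z - x) = z by ring]

lemma exZ' (hz : ∃ z, c z = 0) (x : ZMod n) : ∃ k : ℕ, c (x - (k : ZMod n)) = 0 := by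
  obtain ⟨z, hz⟩ := hz
  refine ⟨(x - z).val, ?_⟩
  rwa [ZMod.natCast_rightInverse (x - z), show x - (x - z) = z by ring]

noncomputable def lenF (hz : ∃ z, c z = 0) (i : ZMod n) : ℕ :=
  Nat.find (exZ hz (i + 1))

noncomputable def msF (hz : ∃ z, c z = 0) (s : ZMod n) : ℕ :=
  Nat.find (exZ' hz (s - 1))

noncomputable def iotaF (hz : ∃ z, c z = 0) (s : ZMod n) : ZMod n :=
  s - 1 - ((msF hz s : ℕ) : ZMod n)

noncomputable def arcT (hz : ∃ z, c z = 0) (i : ZMod n) : Finset (ZMod n) :=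
  (Finset.range (lenF hz i)).image fun j : ℕ => (i + 1) + (j : ZMod n)

lemma lenF_spec (hz : ∃ z, c z = 0) (i : ZMod n) :
    c ((i + 1) + ((lenF hz i : ℕ) : ZMod n)) = 0 := Nat.find_spec (exZ hz (i + 1))

lemma lenF_min (hz : ∃ z, c z = 0) (i : ZMod n) {k : ℕ} (hk : k < lenF hz i) :
    c ((i + 1) + (k : ZMod n)) ≠ 0 := Nat.find_min (exZ hz (i + 1)) hk

lemma msF_spec (hz : ∃ z, c z = 0) (s : ZMod n) :
    c ((s - 1) - ((msF hz s : ℕ) : ZMod n)) = 0 := Nat.find_spec (exZ' hz (s - 1))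

lemma msF_min (hz : ∃ z, c z = 0) (s : ZMod n) {k : ℕ} (hk : k < msF hz s) :
    c ((s - 1) - (k : ZMod n)) ≠ 0 := Nat.find_min (exZ' hz (s - 1)) hk

lemma lenF_pos (hz : ∃ z, c z = 0) {i : ZMod n} (hi : c (i + 1) ≠ 0) : 0 < lenF hz i := by
  rcases Nat.eq_zero_or_pos (lenF hz i) with h | h
  · exfalso; have := lenF_spec hz i; rw [h] at this; simp at this; exact hi this
  · exact h

lemma mem_arcT (hz : ∃ z, c z = 0) {i s : ZMod n} :
    s ∈ arcT hz i ↔ ∃ j < lenF hz i, s = (i + 1) + (j : ZMod n) := by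
  simp only [arcT, Finset.mem_image, Finset.mem_range]
  constructor
  · rintro ⟨j, hj, rfl⟩; exact ⟨j, hj, rfl⟩
  · rintro ⟨j, hj, rfl⟩; exact ⟨j, hj, rfl⟩

lemma arcT_ne_zero (hz : ∃ z, c z = 0) {i s : ZMod n} (h : s ∈ arcT hz i) : c s ≠ 0 := by
  obtain ⟨j, hj, rfl⟩ := (mem_arcT hz).mp h
  exact lenF_min hz i hj

lemma iotaF_mem (hz : ∃ z, c z = 0) {s : ZMod n} (hs : c s ≠ 0) :
    c (iotaF hz s) = 0 ∧ c (iotaF hz s + 1) ≠ 0 := by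
  refine ⟨msF_spec hz s, ?_⟩
  rcases Nat.eq_zero_or_pos (msF hz s) with h | h
  · have : iotaF hz s + 1 = s := by rw [iotaF, h]; push_cast; ring
    rwa [this]
  · have hlt : msF hz s - 1 < msF hz s := Nat.sub_lt h one_pos
    have hc : ((msF hz s : ℕ) : ZMod n) = ((msF hz s - 1 : ℕ) : ZMod n) + 1 := by
      calc ((msF hz s : ℕ) : ZMod n) = (((msF hz s - 1) + 1 : ℕ) : ZMod n) := by
            congr 1; omega
        _ = _ := by push_cast; ring
    have : iotaF hz s + 1 = (s - 1) - ((msF hz s - 1 : ℕ) : ZMod n) := by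
      rw [iotaF, hc]; ring
    rw [this]
    exact msF_min hz s hlt

lemma key_eq (hz : ∃ z, c z = 0) {i s : ZMod n} (hi : c i = 0)
    (hmem : s ∈ arcT hz i) : i = iotaF hz s ∧ msF hz s < lenF hz i := by
  obtain ⟨j, hj, rfl⟩ := (mem_arcT hz).mp hmem
  have heq : ((i + 1) + (j : ZMod n) - 1) - (j : ZMod n) = i := by ring
  have hle : msF hz ((i + 1) + (j : ZMod n)) ≤ j := by
    apply Nat.find_min'
    rw [heq]; exact hi
  have hge : j ≤ msF hz ((i + 1) + (j : ZMod n)) := by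
    by_contra hlt
    push_neg at hlt
    set m := msF hz ((i + 1) + (j : ZMod n)) with hm
    have hspec := msF_spec hz ((i + 1) + (j : ZMod n))
    have hcast : (j : ZMod n) = ((j - m - 1 : ℕ) : ZMod n) + (m : ZMod n) + 1 := by
      calc (j : ZMod n) = (((j - m - 1) + m + 1 : ℕ) : ZMod n) := by
            congr 1; omega
        _ = _ := by push_cast; ring
    have : ((i + 1) + (j : ZMod n) - 1) - (m : ZMod n)
        = (i + 1) + ((j - m - 1 : ℕ) : ZMod n) := by
      rw [hcast]; ring
    rw [this] at hspec
    exact lenF_min hz i (by omega) hspec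
  have hmj : msF hz ((i + 1) + (j : ZMod n)) = j := le_antisymm hle hge
  constructor
  · rw [iotaF, hmj, heq]
  · rw [hmj]; exact hj

lemma mem_iotaF (hz : ∃ z, c z = 0) {s : ZMod n} (hs : c s ≠ 0) :
    s ∈ arcT hz (iotaF hz s) := by
  set m := msF hz s with hm
  set i := iotaF hz s with hi
  have hseq : s = (i + 1) + (m : ZMod n) := by rw [hi, iotaF, ← hm]; ring
  rw [mem_arcT hz]
  refine ⟨m, ?_, hseq⟩
  by_contra hle
  push_neg at hle
  set L := lenF hz i with hL
  have hspec : c ((i + 1) + (L : ZMod n)) = 0 := lenF_spec hz i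
  rcases eq_or_lt_of_le hle with hLm | hLm
  · rw [hLm, ← hseq] at hspec; exact hs hspec
  · have hcast : (m : ZMod n) = ((m - L - 1 : ℕ) : ZMod n) + (L : ZMod n) + 1 := by
      calc (m : ZMod n) = (((m - L - 1) + L + 1 : ℕ) : ZMod n) := by congr 1; omega
        _ = _ := by push_cast; ring
    have : (i + 1) + (L : ZMod n) = (s - 1) - ((m - L - 1 : ℕ) : ZMod n) := by
      rw [hseq, hcast]; ring
    rw [this] at hspec
    exact msF_min hz s (by omega) hspec

lemma arc_pred {T : Finset (ZMod n)} (hT : IsArc T)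
    (hTne : T ≠ Finset.univ) {x y : ZMod n} (hx : x ∉ T) (hx1 : x + 1 ∈ T)
    (hy : y ∉ T) (hy1 : y + 1 ∈ T) : x = y := by
  obtain ⟨a, k, hk, rfl⟩ := hT
  have hkn : k < n := by
    by_contra hkn
    push_neg at hkn
    apply hTne
    ext z
    simp only [Finset.mem_univ, iff_true, Finset.mem_image, Finset.mem_range]
    exact ⟨(z - a).val, lt_of_lt_of_le (ZMod.val_lt _) hkn,
      by rw [ZMod.natCast_rightInverse (z - a)]; ring⟩
  have key : ∀ w : ZMod n, w ∉ (Finset.range k).image (fun j : ℕ => a + (j : ZMod n)) →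
      w + 1 ∈ (Finset.range k).image (fun j : ℕ => a + (j : ZMod n)) → w = a - 1 := by
    intro w hw hw1
    simp only [Finset.mem_image, Finset.mem_range] at hw1
    obtain ⟨j, hj, hwj⟩ := hw1
    rcases Nat.eq_zero_or_pos j with h0 | h0
    · rw [h0] at hwj; push_cast at hwj; linear_combination -hwj
    · exfalso
      apply hw
      simp only [Finset.mem_image, Finset.mem_range]
      refine ⟨j - 1, by omega, ?_⟩
      have : (j : ZMod n) = ((j - 1 : ℕ) : ZMod n) + 1 := by
        calc (j : ZMod n) = (((j - 1) + 1 : ℕ) : ZMod n) := by congr 1; omega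
          _ = _ := by push_cast; ring
      rw [this] at hwj
      have : w + 1 = (a + ((j - 1 : ℕ) : ZMod n)) + 1 := by rw [← hwj]; ring
      exact (add_left_injective 1 this).symm
  rw [key x hx hx1, key y hy hy1]

end AuxLemmas

lemma cycL_eq {n : ℕ} [NeZero n] {F : Type*} [Zero F] [DecidableEq F] (c : ZMod n → F)
    (hs : ∃ s, c s ≠ 0) (hz : ∃ z, c z = 0) :
    cycL (Finset.univ.filter fun i : ZMod n => c i ≠ 0)
      = (Finset.univ.filter fun i : ZMod n => c i = 0 ∧ c (i + 1) ≠ 0).card := by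
  classical
  set S := Finset.univ.filter fun i : ZMod n => c i ≠ 0 with hS
  set B := Finset.univ.filter fun i : ZMod n => c i = 0 ∧ c (i + 1) ≠ 0 with hB
  have hmemB : ∀ i, i ∈ B ↔ c i = 0 ∧ c (i + 1) ≠ 0 := by intro i; simp [hB]
  have hmemS : ∀ i, i ∈ S ↔ c i ≠ 0 := by intro i; simp [hS]
  have hinj : Set.InjOn (arcT hz) ↑B := by
    intro i hi i' hi' he
    rw [Finset.mem_coe, hmemB] at hi hi'
    have h1 : i + 1 ∈ arcT hz i := (mem_arcT hz).mpr ⟨0, lenF_pos hz hi.2, by push_cast; ring⟩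
    have h1' : i + 1 ∈ arcT hz i' := he ▸ h1
    have e1 := (key_eq hz hi.1 h1).1
    have e2 := (key_eq hz hi'.1 h1').1
    rw [e1, e2]
  have hPmem : B.card ∈ {m | ∃ P : Finset (Finset (ZMod n)), P.card = m ∧
      (∀ T ∈ P, IsArc T) ∧ (↑P : Set (Finset (ZMod n))).PairwiseDisjoint id ∧ P.sup id = S} := by
    refine ⟨B.image (arcT hz), Finset.card_image_of_injOn hinj, ?_, ?_, ?_⟩
    · intro T hT
      obtain ⟨i, hi, rfl⟩ := Finset.mem_image.mp hT
      rw [hmemB] at hi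
      exact ⟨i + 1, lenF hz i, lenF_pos hz hi.2, rfl⟩
    · intro T hT T' hT' hne
      simp only [Finset.coe_image, Set.mem_image, Finset.mem_coe] at hT hT'
      obtain ⟨i, hi, rfl⟩ := hT
      obtain ⟨i', hi', rfl⟩ := hT'
      rw [Function.onFun, id, id, Finset.disjoint_left]
      intro s hsi hsi'
      rw [hmemB] at hi hi'
      have e1 := (key_eq hz hi.1 hsi).1
      have e2 := (key_eq hz hi'.1 hsi').1
      exact hne (by rw [e1, e2])
    · ext s
      rw [Finset.mem_sup, hmemS]
      constructor
      · rintro ⟨T, hT, hsT⟩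
        obtain ⟨i, hi, rfl⟩ := Finset.mem_image.mp hT
        exact arcT_ne_zero hz hsT
      · intro hsne
        refine ⟨arcT hz (iotaF hz s), Finset.mem_image_of_mem _ ?_, mem_iotaF hz hsne⟩
        rw [hmemB]
        exact iotaF_mem hz hsne
  apply le_antisymm
  · exact Nat.sInf_le hPmem
  · refine le_csInf ⟨_, hPmem⟩ ?_
    rintro m ⟨P, rfl, harc, hdisj, hsup⟩
    have hch : ∀ i : ZMod n, i ∈ B → ∃ T, T ∈ P ∧ i + 1 ∈ T := by
      intro i hi
      rw [hmemB] at hi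
      have h2 : i + 1 ∈ P.sup id := by rw [hsup, hmemS]; exact hi.2
      rw [Finset.mem_sup] at h2
      exact h2
    set f : ZMod n → Finset (ZMod n) := fun i =>
      if h : ∃ T, T ∈ P ∧ i + 1 ∈ T then h.choose else ∅ with hf
    have hfspec : ∀ i ∈ B, f i ∈ P ∧ i + 1 ∈ f i := by
      intro i hi
      have h := hch i hi
      rw [hf]; simp only [dif_pos h]
      exact h.choose_spec
    apply Finset.card_le_card_of_injOn f
    · intro i hi
      exact (hfspec i hi).1
    · intro i hi i' hi' he
      have hfi := hfspec i (Finset.mem_coe.mp hi)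
      have hfi' := hfspec i' (Finset.mem_coe.mp hi')
      rw [Finset.mem_coe, hmemB] at hi hi'
      have hsub : f i ⊆ S := by
        rw [← hsup]; exact Finset.le_sup (f := id) hfi.1
      have hiT : i ∉ f i := fun hmem => by
        have h3 := hsub hmem; rw [hmemS] at h3; exact h3 hi.1
      have hi'T : i' ∉ f i := fun hmem => by
        have h3 := hsub hmem; rw [hmemS] at h3; exact h3 hi'.1
      have hTne : f i ≠ Finset.univ := fun hu => hiT (hu ▸ Finset.mem_univ i)
      exact arc_pred (harc _ hfi.1) hTne hiT hfi.2 hi'T (by rw [he]; exact hfi'.2)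


/-- for `c ∈ F_q^n` with `0 < w_H(c) < n`, the pair-weight satisfies
`w_P(c) = w_H(c) + I(c)` where `I(c) = L({i : c_i ≠ 0})`, and consequently
`w_H(c) + 1 ≤ w_P(c) ≤ min{2 w_H(c), n}`. -/
theorem stmt3 {n : ℕ} [NeZero n] {F : Type*} [Field F] [Fintype F] [DecidableEq F]
    (c : ZMod n → F) (h1 : 0 < hammingNorm c) (h2 : hammingNorm c < n) :
    pairDist c 0 = hammingNorm c + cycL (Finset.univ.filter fun i : ZMod n => c i ≠ 0) ∧
    hammingNorm c + 1 ≤ pairDist c 0 ∧ pairDist c 0 ≤ min (2 * hammingNorm c) n := by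
  --

  classical
  have hnorm : hammingNorm c = (Finset.univ.filter fun i : ZMod n => c i ≠ 0).card := rfl
  have hs : ∃ s, c s ≠ 0 := by
    by_contra h; push_neg at h
    have h0 : hammingNorm c = 0 := by
      rw [hnorm, Finset.card_eq_zero, Finset.filter_eq_empty_iff]
      intro i _; simpa using h i
    omega
  have hz : ∃ z, c z = 0 := by
    by_contra h; push_neg at h
    have h0 : hammingNorm c = n := by
      rw [hnorm, Finset.filter_true_of_mem (fun i _ => h i), Finset.card_univ, ZMod.card]
    omega
  set S := Finset.univ.filter fun i : ZMod n => c i ≠ 0 with hS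
  set B := Finset.univ.filter fun i : ZMod n => c i = 0 ∧ c (i + 1) ≠ 0 with hB
  have hcyc : cycL S = B.card := cycL_eq c hs hz
  have hdisj : Disjoint S B := by
    rw [Finset.disjoint_left]
    intro a ha hb
    simp only [hS, hB, Finset.mem_filter] at ha hb
    exact ha.2 hb.2.1
  have hsplit : (Finset.univ.filter fun i : ZMod n =>
      (c i, c (i + 1)) ≠ ((0 : ZMod n → F) i, (0 : ZMod n → F) (i + 1))) = S ∪ B := by
    ext i
    simp only [hS, hB, Finset.mem_union, Finset.mem_filter, Finset.mem_univ, true_and,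
      Pi.zero_apply, Ne, Prod.mk.injEq, not_and]
    by_cases hc : c i = 0 <;> by_cases hc1 : c (i + 1) = 0 <;> simp [hc, hc1]
  have hpair : pairDist c 0 = hammingNorm c + B.card := by
    rw [pairDist, hsplit, Finset.card_union_of_disjoint hdisj, hnorm]
  have hBne : B.Nonempty := by
    obtain ⟨s0, hs0⟩ := hs
    refine ⟨iotaF hz s0, ?_⟩
    simp only [hB, Finset.mem_filter, Finset.mem_univ, true_and]
    exact iotaF_mem hz hs0
  have hBpos : 0 < B.card := Finset.card_pos.mpr hBne
  have hBS : B.card ≤ S.card := by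
    apply Finset.card_le_card_of_injOn (fun i => i + 1)
    · intro i hi
      simp only [Finset.mem_coe, hB, Finset.mem_filter, Finset.mem_univ, true_and] at hi
      simp only [Finset.mem_coe, hS, Finset.mem_filter, Finset.mem_univ, true_and]
      exact hi.2
    · exact (add_left_injective 1).injOn
  have hn : pairDist c 0 ≤ n := by
    rw [pairDist]
    calc (Finset.univ.filter _).card ≤ Finset.univ.card := Finset.card_filter_le _ _
      _ = n := by rw [Finset.card_univ, ZMod.card]
  refine ⟨by rw [hpair, hcyc], by omega, le_min (by rw [hnorm] at hpair ⊢; omega) hn⟩
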